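/- arXiv:2203.09693 — 2 statements merged into one kernel-verified Lean document; each statement's English description precedes it below -/
import Mathlib

section
/- For any pair of unit vectors w₁, w₂ in ℝⁿ with w₁ᵀw₂ ≥ 0, it holds that ‖w₁ - w₂‖₂² ≤ ‖w₁w₁ᵀ - w₂w₂ᵀ‖_F² ≤ 2‖w₁ - w₂‖₂². -/
theorem stmt_0 (n : ℕ) (w₁ w₂ : Fin n → ℝ)
    (h₁ : ∑ i, w₁ i ^ 2 = 1) (h₂ : ∑ i, w₂ i ^ 2 = 1)
    (hpos : 0 ≤ ∑ i, w₁ i * w₂ i) :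
    (∑ i, (w₁ i - w₂ i) ^ 2) ≤ (∑ i, ∑ j, (w₁ i * w₁ j - w₂ i * w₂ j) ^ 2) ∧
    (∑ i, ∑ j, (w₁ i * w₁ j - w₂ i * w₂ j) ^ 2) ≤ 2 * ∑ i, (w₁ i - w₂ i) ^ 2 := by
  set t : ℝ := ∑ i, w₁ i * w₂ i with ht
  have hcs : t ^ 2 ≤ 1 := by
    have := Finset.sum_mul_sq_le_sq_mul_sq Finset.univ w₁ w₂
    rw [h₁, h₂] at this
    simpa [ht] using this
  have hd : ∑ i, (w₁ i - w₂ i) ^ 2 = 2 - 2 * t := by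
    have e : ∀ i, (w₁ i - w₂ i) ^ 2 = w₁ i ^ 2 + w₂ i ^ 2 - 2 * (w₁ i * w₂ i) :=
      fun i => by ring
    simp only [e, Finset.sum_sub_distrib, Finset.sum_add_distrib, ← Finset.mul_sum, h₁, h₂, ← ht]
    ring
  have hF : (∑ i, ∑ j, (w₁ i * w₁ j - w₂ i * w₂ j) ^ 2) = 2 - 2 * t ^ 2 := by
    have e : ∀ i j, (w₁ i * w₁ j - w₂ i * w₂ j) ^ 2 =
        w₁ i ^ 2 * w₁ j ^ 2 + w₂ i ^ 2 * w₂ j ^ 2 - 2 * ((w₁ i * w₂ i) * (w₁ j * w₂ j)) :=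
      fun i j => by ring
    simp only [e, Finset.sum_sub_distrib, Finset.sum_add_distrib, ← Finset.mul_sum,
      ← Finset.sum_mul, h₁, h₂, ← ht]
    ring
  rw [hd, hF]
  constructor
  · nlinarith [hpos, hcs]
  · nlinarith [sq_nonneg (t - 1)]
end

section
/- Let V ∈ ℝ^{n×n} be positive semidefinite, let K ⊆ ℝⁿ be a set contained in the unit sphere, and let 𝒫 : ℝⁿ → K be a projection map satisfying ‖x - 𝒫(x)‖₂ ≤ ‖x - w‖₂ for all w ∈ K. Define the iteration w^{(t+1)} = 𝒫(V w^{(t)}) with w^{(0)} ∈ K, and Q(x) = xᵀVx. Then the sequence Q(w^{(t)}) is monotonically non-decreasing in t. -/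
open scoped Matrix in
theorem stmt_3_aux (n : ℕ) (V : Matrix (Fin n) (Fin n) ℝ)
    (hsym : ∀ a b : Fin n → ℝ, a ⬝ᵥ V.mulVec b = b ⬝ᵥ V.mulVec a) (p q : Fin n → ℝ) :
    (p - q) ⬝ᵥ V.mulVec (p - q)
      = p ⬝ᵥ V.mulVec p - 2 * (p ⬝ᵥ V.mulVec q) + q ⬝ᵥ V.mulVec q := by
  rw [Matrix.mulVec_sub, dotProduct_sub, sub_dotProduct, sub_dotProduct, hsym q p]
  ring

open scoped Matrix in
theorem stmt_3 (n : ℕ) (V : Matrix (Fin n) (Fin n) ℝ) (hV : V.PosSemidef)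
    (K : Set (EuclideanSpace ℝ (Fin n))) (hKne : K.Nonempty)
    (hK : ∀ u ∈ K, ‖u‖ = 1)
    (P : EuclideanSpace ℝ (Fin n) → EuclideanSpace ℝ (Fin n))
    (hPK : ∀ x, P x ∈ K)
    (hP : ∀ x, ∀ u ∈ K, ‖x - P x‖ ≤ ‖x - u‖)
    (w : ℕ → EuclideanSpace ℝ (Fin n)) (hw0 : w 0 ∈ K)
    (hiter : ∀ t, w (t + 1) = P ((WithLp.toLp 2 (V.mulVec (w t)) : EuclideanSpace ℝ (Fin n)))) :
    Monotone fun t => (w t : Fin n → ℝ) ⬝ᵥ V.mulVec (w t) := by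
  have hinner : ∀ x y : EuclideanSpace ℝ (Fin n),
      inner (𝕜 := ℝ) x y = (x : Fin n → ℝ) ⬝ᵥ y := by
    intro x y
    simp [PiLp.inner_apply, dotProduct, RCLike.inner_apply, mul_comm]
  have hsym : ∀ a b : Fin n → ℝ, a ⬝ᵥ V.mulVec b = b ⬝ᵥ V.mulVec a := by
    intro a b
    rw [Matrix.dotProduct_mulVec, ← Matrix.vecMul_transpose, show Vᵀ = V from hV.1]
    exact dotProduct_comm _ _
  have hwK : ∀ t, w t ∈ K := by
    intro t
    induction t with
    | zero => exact hw0
    | succ t ih => rw [hiter t]; exact hPK _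
  apply monotone_nat_of_le_succ
  intro t
  set a : EuclideanSpace ℝ (Fin n) := w t with ha
  set b : EuclideanSpace ℝ (Fin n) := w (t + 1) with hb
  set x : EuclideanSpace ℝ (Fin n) := (WithLp.toLp 2 (V.mulVec a) : EuclideanSpace ℝ (Fin n)) with hx
  have hbx : b = P x := hiter t
  have hle : ‖x - b‖ ≤ ‖x - a‖ := by rw [hbx]; exact hP x a (hwK t)
  have hna : ‖a‖ = 1 := hK a (hwK t)
  have hnb : ‖b‖ = 1 := hK b (hwK (t + 1))
  -- squared inequality
  have hsq : ‖x - b‖ ^ 2 ≤ ‖x - a‖ ^ 2 := by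
    have := norm_nonneg (x - b)
    nlinarith [norm_nonneg (x - a)]
  have hexp : ∀ y : EuclideanSpace ℝ (Fin n), ‖y‖ = 1 →
      ‖x - y‖ ^ 2 = ‖x‖ ^ 2 - 2 * inner (𝕜 := ℝ) x y + 1 := by
    intro y hy
    rw [norm_sub_sq_real, hy]; ring
  rw [hexp a hna, hexp b hnb] at hsq
  have hkey : inner (𝕜 := ℝ) x a ≤ inner (𝕜 := ℝ) x b := by linarith
  rw [hinner, hinner] at hkey
  -- hkey : (V *ᵥ a) ⬝ᵥ a ≤ (V *ᵥ a) ⬝ᵥ b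
  have hpsd : 0 ≤ ((b : Fin n → ℝ) - (a : Fin n → ℝ)) ⬝ᵥ V.mulVec ((b : Fin n → ℝ) - (a : Fin n → ℝ)) := by
    have := (Matrix.posSemidef_iff_dotProduct_mulVec.mp hV).2 ((b : Fin n → ℝ) - (a : Fin n → ℝ)); simpa using this
  have hexp2 : ((b : Fin n → ℝ) - (a : Fin n → ℝ)) ⬝ᵥ V.mulVec ((b : Fin n → ℝ) - (a : Fin n → ℝ))
      = (b : Fin n → ℝ) ⬝ᵥ V.mulVec b - 2 * ((b : Fin n → ℝ) ⬝ᵥ V.mulVec a)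
        + (a : Fin n → ℝ) ⬝ᵥ V.mulVec a := by
    exact stmt_3_aux n V hsym _ _
  have h1 : (x : Fin n → ℝ) ⬝ᵥ a = (a : Fin n → ℝ) ⬝ᵥ V.mulVec a :=
    dotProduct_comm _ _
  have h2 : (x : Fin n → ℝ) ⬝ᵥ b = (b : Fin n → ℝ) ⬝ᵥ V.mulVec a :=
    dotProduct_comm _ _
  simp only [h1, h2] at hkey
  linarith [hexp2 ▸ hpsd]
end
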